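/- The 6×6 extended boxworld matrix C_EBW with rows (0,0,0,0,1,1),(1,0,0,1,0,0),(0,1,1,0,0,0),(0,0,0,0,1,1),(1,0,1,0,0,0),(0,1,0,1,0,0) has rank 4, and the factorization C_EBW = W·H with W the 6×5 matrix with rows (0,0,0,0,1),(1,0,0,1,0),(0,1,1,0,0),(0,0,0,0,1),(1,0,1,0,0),(0,1,0,1,0) and H the 5×6 matrix whose first four rows are the first four standard basis row vectors of ℝ^6 and whose fifth row is (0,0,0,0,1,1), is an exact nonnegative factorization with rank(W) = 4 and rank(H) = 5; in particular rank(H) > rank(C_EBW). -/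

import Mathlib

open Matrix

private def Cm : Matrix (Fin 6) (Fin 6) ℝ :=
  !![0,0,0,0,1,1; 1,0,0,1,0,0; 0,1,1,0,0,0; 0,0,0,0,1,1; 1,0,1,0,0,0; 0,1,0,1,0,0]
private def Wm : Matrix (Fin 6) (Fin 5) ℝ :=
  !![0,0,0,0,1; 1,0,0,1,0; 0,1,1,0,0; 0,0,0,0,1; 1,0,1,0,0; 0,1,0,1,0]
private def Hm : Matrix (Fin 5) (Fin 6) ℝ :=
  !![1,0,0,0,0,0; 0,1,0,0,0,0; 0,0,1,0,0,0; 0,0,0,1,0,0; 0,0,0,0,1,1]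
private def Lm : Matrix (Fin 4) (Fin 6) ℝ :=
  !![1,0,0,0,0,0; 0,1,0,0,0,0; 0,0,1,0,0,0; 0,0,0,0,1,0]
private def R6m : Matrix (Fin 6) (Fin 4) ℝ :=
  !![1,0,0,0; 0,1,0,0; 0,0,1,0; 0,0,0,0; 0,0,0,1; 0,0,0,0]
private def R5m : Matrix (Fin 5) (Fin 4) ℝ :=
  !![1,0,0,0; 0,1,0,0; 0,0,1,0; 0,0,0,0; 0,0,0,1]
private def Nm : Matrix (Fin 4) (Fin 4) ℝ :=
  !![0,1,0,0; 0,1,1,-1; 0,-1,0,1; 1,0,0,0]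
private def Mm : Matrix (Fin 4) (Fin 4) ℝ :=
  !![0,0,0,1; 1,0,0,0; 0,1,1,0; 1,0,1,0]
private def Pm : Matrix (Fin 6) (Fin 4) ℝ :=
  !![1,0,0,0; 0,1,0,0; 0,0,1,0; 1,0,0,0; 0,0,0,1; 0,1,1,-1]
private def Bm : Matrix (Fin 4) (Fin 5) ℝ :=
  !![0,0,0,0,1; 1,0,0,1,0; 0,1,1,0,0; 1,0,1,0,0]
private def Sm : Matrix (Fin 6) (Fin 5) ℝ :=
  !![1,0,0,0,0; 0,1,0,0,0; 0,0,1,0,0; 0,0,0,1,0; 0,0,0,0,1; 0,0,0,0,0]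

private lemma rank_ge_of_unit {m n k : ℕ} (A : Matrix (Fin m) (Fin n) ℝ)
    (L : Matrix (Fin k) (Fin m) ℝ) (R : Matrix (Fin n) (Fin k) ℝ)
    (N : Matrix (Fin k) (Fin k) ℝ) (h : L * A * R * N = 1) :
    k ≤ A.rank := by
  have hu : IsUnit (L * A * R) := IsUnit.of_mul_eq_one _ h
  have h1 : (L * A * R).rank = k := by
    simpa using Matrix.rank_of_isUnit _ hu
  calc k = (L * A * R).rank := h1.symm
    _ = (L * (A * R)).rank := by rw [Matrix.mul_assoc]
    _ ≤ (A * R).rank := Matrix.rank_mul_le_right _ _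
    _ ≤ A.rank := Matrix.rank_mul_le_left _ _

private lemma hMN : Mm * Nm = 1 := by
  rw [Mm, Nm]
  ext i j
  fin_cases i <;> fin_cases j <;>
    simp [Matrix.mul_apply, Fin.sum_univ_succ, Matrix.one_apply,
      Matrix.cons_val_succ, Matrix.vecHead, Matrix.vecTail]

private lemma hfac : Cm = Wm * Hm := by
  rw [Cm, Wm, Hm]
  ext i j
  fin_cases i <;> fin_cases j <;>
    simp [Matrix.mul_apply, Fin.sum_univ_succ,
      show (5:Fin 6) = Fin.succ 4 from rfl, show (4:Fin 5) = Fin.succ 3 from rfl,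
      Matrix.cons_val_succ, Matrix.vecHead, Matrix.vecTail]

private lemma hLC : Lm * Cm =
    !![0,0,0,0,1,1; 1,0,0,1,0,0; 0,1,1,0,0,0; 1,0,1,0,0,0] := by
  rw [Lm, Cm]
  ext i j
  fin_cases i <;> fin_cases j <;>
    simp [Matrix.mul_apply, Fin.sum_univ_succ,
      show (5:Fin 6) = Fin.succ 4 from rfl,
      Matrix.cons_val_succ, Matrix.vecHead, Matrix.vecTail]

private lemma hLCR : (!![0,0,0,0,1,1; 1,0,0,1,0,0; 0,1,1,0,0,0; 1,0,1,0,0,0] :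
    Matrix (Fin 4) (Fin 6) ℝ) * R6m = Mm := by
  rw [R6m, Mm]
  ext i j
  fin_cases i <;> fin_cases j <;>
    simp [Matrix.mul_apply, Fin.sum_univ_succ,
      show (5:Fin 6) = Fin.succ 4 from rfl,
      Matrix.cons_val_succ, Matrix.vecHead, Matrix.vecTail]

private lemma hLW : Lm * Wm =
    !![0,0,0,0,1; 1,0,0,1,0; 0,1,1,0,0; 1,0,1,0,0] := by
  rw [Lm, Wm]
  ext i j
  fin_cases i <;> fin_cases j <;>
    simp [Matrix.mul_apply, Fin.sum_univ_succ,
      show (5:Fin 6) = Fin.succ 4 from rfl, show (4:Fin 5) = Fin.succ 3 from rfl,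
      Matrix.cons_val_succ, Matrix.vecHead, Matrix.vecTail]

private lemma hLWR : (!![0,0,0,0,1; 1,0,0,1,0; 0,1,1,0,0; 1,0,1,0,0] :
    Matrix (Fin 4) (Fin 5) ℝ) * R5m = Mm := by
  rw [R5m, Mm]
  ext i j
  fin_cases i <;> fin_cases j <;>
    simp [Matrix.mul_apply, Fin.sum_univ_succ,
      show (4:Fin 5) = Fin.succ 3 from rfl,
      Matrix.cons_val_succ, Matrix.vecHead, Matrix.vecTail]

private lemma hWfac : Wm = Pm * Bm := by
  rw [Wm, Pm, Bm]
  ext i j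
  fin_cases i <;> fin_cases j <;>
    simp [Matrix.mul_apply, Fin.sum_univ_succ,
      show (5:Fin 6) = Fin.succ 4 from rfl, show (4:Fin 5) = Fin.succ 3 from rfl,
      Matrix.cons_val_succ, Matrix.vecHead, Matrix.vecTail]

private lemma hHS : Hm * Sm = 1 := by
  rw [Hm, Sm]
  ext i j
  fin_cases i <;> fin_cases j <;>
    simp [Matrix.mul_apply, Fin.sum_univ_succ, Matrix.one_apply,
      show (5:Fin 6) = Fin.succ 4 from rfl, show (4:Fin 5) = Fin.succ 3 from rfl,
      Matrix.cons_val_succ, Matrix.vecHead, Matrix.vecTail]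

private lemma hWrank : Wm.rank = 4 := by
  refine le_antisymm ?_ ?_
  · rw [hWfac]
    refine (Matrix.rank_mul_le_right _ _).trans ?_
    simpa using Bm.rank_le_card_height
  · apply rank_ge_of_unit _ Lm R5m Nm
    rw [hLW, hLWR, hMN]

private lemma hCrank : Cm.rank = 4 := by
  refine le_antisymm ?_ ?_
  · rw [hfac]
    exact (Matrix.rank_mul_le_left _ _).trans hWrank.le
  · apply rank_ge_of_unit _ Lm R6m Nm
    rw [hLC, hLCR, hMN]

private lemma hHrank : Hm.rank = 5 := by
  refine le_antisymm ?_ ?_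
  · simpa using Hm.rank_le_card_height
  · apply rank_ge_of_unit _ (1 : Matrix (Fin 5) (Fin 5) ℝ) Sm (1 : Matrix (Fin 5) (Fin 5) ℝ)
    rw [Matrix.one_mul, Matrix.mul_one, hHS]

/-- The extended boxworld matrix has rank 4 and admits the exhibited exact
nonnegative factorization `C_EBW = W * H` with `rank W = 4` and `rank H = 5`;
in particular the equirank condition fails: `rank H > rank C_EBW`. -/
theorem extended_boxworld_contextual_model
    (C : Matrix (Fin 6) (Fin 6) ℝ)
    (hC : C = !![0,0,0,0,1,1;
                 1,0,0,1,0,0;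
                 0,1,1,0,0,0;
                 0,0,0,0,1,1;
                 1,0,1,0,0,0;
                 0,1,0,1,0,0])
    (W : Matrix (Fin 6) (Fin 5) ℝ)
    (hW : W = !![0,0,0,0,1;
                 1,0,0,1,0;
                 0,1,1,0,0;
                 0,0,0,0,1;
                 1,0,1,0,0;
                 0,1,0,1,0])
    (H : Matrix (Fin 5) (Fin 6) ℝ)
    (hH : H = !![1,0,0,0,0,0;
                 0,1,0,0,0,0;
                 0,0,1,0,0,0;
                 0,0,0,1,0,0;
                 0,0,0,0,1,1]) :
    C.rank = 4 ∧ C = W * H ∧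
    (∀ i j, 0 ≤ W i j) ∧ (∀ i j, 0 ≤ H i j) ∧
    W.rank = 4 ∧ H.rank = 5 ∧ C.rank < H.rank := by
  have hC' : C = Cm := by rw [hC, Cm]
  have hW' : W = Wm := by rw [hW, Wm]
  have hH' : H = Hm := by rw [hH, Hm]
  subst hC' hW' hH'
  refine ⟨hCrank, hfac, ?_, ?_, hWrank, hHrank, by rw [hCrank, hHrank]; norm_num⟩
  · intro i j
    rw [Wm]
    fin_cases i <;> fin_cases j <;>
      norm_num [show (5:Fin 6) = Fin.succ 4 from rfl, show (4:Fin 5) = Fin.succ 3 from rfl,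
        Matrix.cons_val_succ, Matrix.vecHead, Matrix.vecTail]
  · intro i j
    rw [Hm]
    fin_cases i <;> fin_cases j <;>
      norm_num [show (5:Fin 6) = Fin.succ 4 from rfl, show (4:Fin 5) = Fin.succ 3 from rfl,
        Matrix.cons_val_succ, Matrix.vecHead, Matrix.vecTail]
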